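/- Let ω:[0,∞)→[0,∞) be a continuity modulus satisfying (ω1) and (ω2), strictly increasing on a right neighborhood of 0 with inverse ω^{-1}; let g(σ) := √σ · ω^{-1}(σ) and let h be the inverse function of g. Let φ:[0,∞)→[1,∞) satisfy lim_{σ→+∞} σ·[φ(σ/√(ω(1/σ)))]^{-1} = +∞. Then lim_{z→+∞} (z/φ(z))·[h(1/z)]^{1/2} = +∞. -/

import Mathlib

/-- Let `ω` satisfy (ω1) and (ω2), strictly increasing on a
right neighborhood `[0,ν]` of `0` with local inverse `ωinv`; let
`g(σ) = √σ · ωinv σ` and let `h` be an inverse function of `g`. If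
`φ : [0,∞) → [1,∞)` satisfies `σ / φ(σ/√(ω(1/σ))) → +∞` as `σ → +∞`, then
`(z/φ(z)) · √(h(1/z)) → +∞` as `z → +∞`. -/
theorem h_sqrt_phi_limit
    (ω : ℝ → ℝ)
    (hω_cont : ContinuousOn ω (Set.Ici 0))
    (hω_mono : MonotoneOn ω (Set.Ici 0))
    (hω_nonneg : ∀ σ ≥ (0:ℝ), 0 ≤ ω σ)
    (hω_zero : ω 0 = 0)
    (hω_subadd : ∀ a ≥ (0:ℝ), ∀ b ≥ (0:ℝ), ω (a + b) ≤ ω a + ω b)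
    (hω2 : ∀ a b : ℝ, 0 < a → a ≤ b → a / ω a ≤ b / ω b)
    (ν : ℝ) (hν : 0 < ν)
    (hω_strict : StrictMonoOn ω (Set.Icc 0 ν))
    (ωinv : ℝ → ℝ)
    (hinv_left : ∀ σ ∈ Set.Icc (0:ℝ) ν, ωinv (ω σ) = σ)
    (hinv_right : ∀ y ∈ Set.Icc 0 (ω ν), ω (ωinv y) = y)
    (φ : ℝ → ℝ)
    (hφ_ge : ∀ σ ≥ (0:ℝ), 1 ≤ φ σ)
    (hφ_lim : Filter.Tendsto
      (fun σ : ℝ => σ * (φ (σ / Real.sqrt (ω (1 / σ))))⁻¹)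
      Filter.atTop Filter.atTop) :
    ∀ h : ℝ → ℝ,
      (∀ σ ∈ Set.Ioo (0:ℝ) (ω ν), h (Real.sqrt σ * ωinv σ) = σ) →
      Filter.Tendsto (fun z : ℝ => z / φ z * Real.sqrt (h (1 / z)))
        Filter.atTop Filter.atTop := by
  intro h hh
  rw [Filter.tendsto_atTop]
  intro M
  obtain ⟨S₀, hS₀⟩ := Filter.eventually_atTop.mp (hφ_lim.eventually_ge_atTop M)
  set S : ℝ := max S₀ 1 with hSdef
  have hSpos : (0:ℝ) < S := lt_of_lt_of_le one_pos (le_max_right _ _)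
  set t : ℝ := min (ν / 2) S⁻¹ with htdef
  have htpos : 0 < t := lt_min (by linarith) (inv_pos.mpr hSpos)
  have htlt : t < ν := lt_of_le_of_lt (min_le_left _ _) (by linarith)
  have hωt : 0 < ω t := by
    have := hω_strict ⟨le_refl 0, hν.le⟩ ⟨htpos.le, htlt.le⟩ htpos
    rwa [hω_zero] at this
  have hsqωt : 0 < Real.sqrt (ω t) := Real.sqrt_pos.mpr hωt
  have hFpos : 0 < Real.sqrt (ω t) * t := mul_pos hsqωt htpos
  rw [Filter.eventually_atTop]
  refine ⟨max (Real.sqrt (ω t) * t)⁻¹ 1, fun z hz => ?_⟩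
  have hz1 : (1:ℝ) ≤ z := le_trans (le_max_right _ _) hz
  have hzpos : (0:ℝ) < z := lt_of_lt_of_le one_pos hz1
  have hzF : (Real.sqrt (ω t) * t)⁻¹ ≤ z := le_trans (le_max_left _ _) hz
  have hzinv : z⁻¹ ≤ Real.sqrt (ω t) * t := by
    have := inv_anti₀ (inv_pos.mpr hFpos) hzF
    rwa [inv_inv] at this
  -- IVT for F τ = √(ω τ) * τ on [0, t]
  have hFcont : ContinuousOn (fun τ : ℝ => Real.sqrt (ω τ) * τ) (Set.Icc 0 t) :=
    ((hω_cont.mono (Set.Icc_subset_Ici_self)).sqrt).mul (continuousOn_id)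
  have hmem : (1/z) ∈ Set.Icc ((fun τ : ℝ => Real.sqrt (ω τ) * τ) 0)
      ((fun τ : ℝ => Real.sqrt (ω τ) * τ) t) := by
    constructor
    · simp only [mul_zero]
      positivity
    · simpa [one_div] using hzinv
  obtain ⟨τ, hτmem, hτ⟩ := intermediate_value_Icc htpos.le hFcont hmem
  simp only at hτ
  have hτ0 : 0 ≤ τ := hτmem.1
  have hτt : τ ≤ t := hτmem.2
  have hτpos : 0 < τ := by
    rcases hτ0.lt_or_eq with h' | h'
    · exact h'
    · exfalso
      rw [← h', mul_zero] at hτ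
      have : 0 < 1/z := by positivity
      rw [← hτ] at this
      exact lt_irrefl 0 this
  have hτν : τ ≤ ν := hτt.trans htlt.le
  have hστpos : 0 < ω τ := by
    have := hω_strict ⟨le_refl 0, hν.le⟩ ⟨hτ0, hτν⟩ hτpos
    rwa [hω_zero] at this
  have hστlt : ω τ < ω ν := hω_strict ⟨hτ0, hτν⟩ ⟨hν.le, le_refl ν⟩ (lt_of_le_of_lt hτt htlt)
  have hωinvτ : ωinv (ω τ) = τ := hinv_left τ ⟨hτ0, hτν⟩
  have hhval : h (1/z) = ω τ := by
    rw [← hτ]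
    have := hh (ω τ) ⟨hστpos, hστlt⟩
    rwa [hωinvτ] at this
  have hsq : 0 < Real.sqrt (ω τ) := Real.sqrt_pos.mpr hστpos
  -- s := τ⁻¹
  have hz' : z * (Real.sqrt (ω τ) * τ) = 1 := by
    rw [hτ]
    field_simp
  have hzsq : z * Real.sqrt (ω τ) = τ⁻¹ := by
    field_simp
    linarith [hz']
  have hsS : S₀ ≤ τ⁻¹ := by
    have h1 : τ ≤ S⁻¹ := hτt.trans (min_le_right _ _)
    have h2 : S ≤ τ⁻¹ := by
      have := inv_anti₀ hτpos h1
      rwa [inv_inv] at this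
    exact le_trans (le_max_left _ _) h2
  have hzeq : τ⁻¹ / Real.sqrt (ω (1/τ⁻¹)) = z := by
    rw [one_div, inv_inv]
    rw [eq_comm, eq_div_iff hsq.ne']; exact hzsq
  have key := hS₀ τ⁻¹ hsS
  try simp only at key
  rw [hzeq] at key
  calc M ≤ τ⁻¹ * (φ z)⁻¹ := key
    _ = z / φ z * Real.sqrt (h (1/z)) := by
        rw [hhval, ← hzsq, div_eq_mul_inv]
        ring
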